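/- Let n ≥ 1, let p_1 < ⋯ < p_n be real numbers, and let a ≥ 0, ε > 0, C ≥ 0. For reals p_1 < ⋯ < p_n and ρ ≤ 0, set m_{AB}(ρ) := min{1, exp(2(p_B − p_A)ρ)}. Then there exist constants C′ ≥ 0 and a′ ≥ 0, depending only on n, the p_A, C, a and ε, such that the following holds for every ρ ≤ 0: if ℓ_1, …, ℓ_n are reals with |ℓ_C − p_C| ≤ C ⟨ρ⟩^a e^{2ερ} for all C, and X, Y are real n×n matrices with |X_{AB} − δ_{AB}| ≤ C ⟨ρ⟩^a e^{2ερ} m_{AB}(ρ) and |Y_{AB} − δ_{AB}| ≤ C ⟨ρ⟩^a e^{2ερ} m_{AB}(ρ) for all A, B, then the matrix 𝒦_{AB} := ∑_{C=1}^{n} ℓ_C X_{AC} Y_{CB} satisfies |𝒦_{AB} − p_B δ_{AB}| ≤ C′ ⟨ρ⟩^{a′} e^{2ερ} m_{AB}(ρ) for all A, B ∈ {1,…,n}. -/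
import Mathlib


/-- The Japanese bracket `⟨x⟩ = (1 + x²)^{1/2}`. -/
noncomputable def jbr (x : ℝ) : ℝ := Real.sqrt (1 + x ^ 2)

private lemma mul3_le {a b c a' b' c' : ℝ} (ha : 0 ≤ a) (hb : 0 ≤ b) (hc : 0 ≤ c)
    (h1 : a ≤ a') (h2 : b ≤ b') (h3 : c ≤ c') : a * b * c ≤ a' * b' * c' :=
  mul_le_mul (mul_le_mul h1 h2 hb (le_trans ha h1)) h3 hc
    (mul_nonneg (le_trans ha h1) (le_trans hb h2))

/-- Weighted convergence of the components of the expansion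
normalised Weingarten map.  With weights `m_{AB}(ρ) = min{1, e^{2(p_B − p_A)ρ}}`,
if `|ℓ_C − p_C| ≤ C ⟨ρ⟩^a e^{2ερ}` and the matrices `X`, `Y` satisfy
`|X_{AB} − δ_{AB}|, |Y_{AB} − δ_{AB}| ≤ C ⟨ρ⟩^a e^{2ερ} m_{AB}(ρ)`, then
`𝒦_{AB} := ∑_C ℓ_C X_{AC} Y_{CB}` satisfies
`|𝒦_{AB} − p_B δ_{AB}| ≤ C′ ⟨ρ⟩^{a′} e^{2ερ} m_{AB}(ρ)`. -/
theorem weingarten_components_weighted_convergence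
    (n : ℕ) (hn : 1 ≤ n) (p : Fin n → ℝ) (hp : StrictMono p)
    (a ε C : ℝ) (ha : 0 ≤ a) (hε : 0 < ε) (hC : 0 ≤ C) :
    ∃ C' a' : ℝ, 0 ≤ C' ∧ 0 ≤ a' ∧
      ∀ ρ ≤ (0 : ℝ), ∀ (ℓ : Fin n → ℝ) (X Y : Fin n → Fin n → ℝ),
        (∀ D, |ℓ D - p D| ≤ C * jbr ρ ^ a * Real.exp (2 * ε * ρ)) →
        (∀ A B, |X A B - (if A = B then 1 else 0)| ≤
          C * jbr ρ ^ a * Real.exp (2 * ε * ρ) *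
            min 1 (Real.exp (2 * (p B - p A) * ρ))) →
        (∀ A B, |Y A B - (if A = B then 1 else 0)| ≤
          C * jbr ρ ^ a * Real.exp (2 * ε * ρ) *
            min 1 (Real.exp (2 * (p B - p A) * ρ))) →
        ∀ A B,
          |(∑ D, ℓ D * X A D * Y D B) - p B * (if A = B then 1 else 0)| ≤
            C' * jbr ρ ^ a' * Real.exp (2 * ε * ρ) *
              min 1 (Real.exp (2 * (p B - p A) * ρ)) := by
  have hne : Nonempty (Fin n) := ⟨⟨0, hn⟩⟩
  obtain ⟨P, hP0, hPle⟩ : ∃ P : ℝ, 0 ≤ P ∧ ∀ i, |p i| ≤ P := by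
    refine ⟨Finset.univ.sup' Finset.univ_nonempty fun i => |p i|, ?_, ?_⟩
    · exact le_trans (abs_nonneg (p (Classical.arbitrary (Fin n))))
        (Finset.le_sup' (fun i => |p i|) (Finset.mem_univ (Classical.arbitrary (Fin n))))
    · intro i; exact Finset.le_sup' (fun i => |p i|) (Finset.mem_univ i)
  refine ⟨n * ((1 + 2 * P) * C * (1 + C) ^ 2), 3 * a, by positivity, by linarith, ?_⟩
  intro ρ hρ ℓ X Y hℓ hX hY A B
  -- notation
  set e : ℝ := Real.exp (2 * ε * ρ) with he
  set J : ℝ := jbr ρ ^ a with hJ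
  set E : ℝ := C * J * e with hEdef
  set m : Fin n → Fin n → ℝ :=
    fun A B => min 1 (Real.exp (2 * (p B - p A) * ρ)) with hm
  have hm0 : ∀ A B, 0 < m A B := fun A B => lt_min one_pos (Real.exp_pos _)
  have hm1 : ∀ A B, m A B ≤ 1 := fun A B => min_le_left _ _
  have hmmul : ∀ A D B, m A D * m D B ≤ m A B := by
    intro A D B
    refine le_min (by nlinarith [hm0 A D, hm0 D B, hm1 A D, hm1 D B]) ?_
    calc m A D * m D B
        ≤ Real.exp (2 * (p D - p A) * ρ) * Real.exp (2 * (p B - p D) * ρ) :=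
          mul_le_mul (min_le_right _ _) (min_le_right _ _) (hm0 _ _).le
            (Real.exp_nonneg _)
      _ = Real.exp (2 * (p B - p A) * ρ) := by rw [← Real.exp_add]; ring_nf
  have hδm : ∀ A B : Fin n, |(if A = B then (1 : ℝ) else 0)| ≤ m A B := by
    intro A B
    by_cases h : A = B
    · subst h; simp [hm]
    · simpa [h] using (hm0 A B).le
  have hj0 : 0 ≤ jbr ρ := Real.sqrt_nonneg _
  have hj1 : (1 : ℝ) ≤ jbr ρ := by
    rw [jbr]
    nlinarith [Real.sq_sqrt (show (0:ℝ) ≤ 1 + ρ ^ 2 by positivity),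
      Real.sqrt_nonneg (1 + ρ ^ 2), sq_nonneg ρ]
  have hja : (1 : ℝ) ≤ J := by
    rw [hJ]
    calc (1 : ℝ) = (1 : ℝ) ^ a := (Real.one_rpow a).symm
      _ ≤ jbr ρ ^ a := Real.rpow_le_rpow zero_le_one hj1 ha
  have he0 : 0 < e := Real.exp_pos _
  have he1 : e ≤ 1 := Real.exp_le_one_iff.mpr (by nlinarith)
  have hE0 : 0 ≤ E := by
    rw [hEdef]; exact mul_nonneg (mul_nonneg hC (by linarith)) he0.le
  -- bounds on entries
  have hXb : ∀ D, |X A D| ≤ (1 + E) * m A D := by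
    intro D
    calc |X A D|
        = |(X A D - (if A = D then 1 else 0)) + (if A = D then 1 else 0)| := by
          ring_nf
      _ ≤ |X A D - (if A = D then 1 else 0)| + |(if A = D then (1 : ℝ) else 0)| :=
          abs_add_le _ _
      _ ≤ E * m A D + m A D := add_le_add (hX A D) (hδm A D)
      _ = (1 + E) * m A D := by ring
  have hYb : ∀ D, |Y D B| ≤ (1 + E) * m D B := by
    intro D
    calc |Y D B|
        = |(Y D B - (if D = B then 1 else 0)) + (if D = B then 1 else 0)| := by
          ring_nf
      _ ≤ |Y D B - (if D = B then 1 else 0)| + |(if D = B then (1 : ℝ) else 0)| :=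
          abs_add_le _ _
      _ ≤ E * m D B + m D B := add_le_add (hY D B) (hδm D B)
      _ = (1 + E) * m D B := by ring
  -- the key per-term estimate
  have hterm : ∀ D : Fin n,
      |ℓ D * X A D * Y D B -
        p D * (if A = D then 1 else 0) * (if D = B then 1 else 0)| ≤
        (1 + 2 * P) * E * (1 + E) ^ 2 * m A B := by
    intro D
    have hmAD := (hm0 A D).le
    have hmDB := (hm0 D B).le
    have key : ℓ D * X A D * Y D B -
        p D * (if A = D then 1 else 0) * (if D = B then 1 else 0)
        = (ℓ D - p D) * X A D * Y D B
          + p D * (X A D - (if A = D then 1 else 0)) * Y D B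
          + p D * (if A = D then 1 else 0) * (Y D B - (if D = B then 1 else 0)) := by
      ring
    have b1 : |(ℓ D - p D) * X A D * Y D B| ≤
        E * ((1 + E) * m A D) * ((1 + E) * m D B) := by
      rw [abs_mul, abs_mul]
      exact mul3_le (abs_nonneg _) (abs_nonneg _) (abs_nonneg _)
        (hℓ D) (hXb D) (hYb D)
    have b2 : |p D * (X A D - (if A = D then 1 else 0)) * Y D B| ≤
        P * (E * m A D) * ((1 + E) * m D B) := by
      rw [abs_mul, abs_mul]
      exact mul3_le (abs_nonneg _) (abs_nonneg _) (abs_nonneg _)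
        (hPle D) (hX A D) (hYb D)
    have b3 : |p D * (if A = D then 1 else 0) * (Y D B - (if D = B then 1 else 0))| ≤
        P * m A D * (E * m D B) := by
      rw [abs_mul, abs_mul]
      exact mul3_le (abs_nonneg _) (abs_nonneg _) (abs_nonneg _)
        (hPle D) (hδm A D) (hY D B)
    have habs : |ℓ D * X A D * Y D B -
        p D * (if A = D then 1 else 0) * (if D = B then 1 else 0)| ≤
        E * ((1 + E) * m A D) * ((1 + E) * m D B)
          + P * (E * m A D) * ((1 + E) * m D B)
          + P * m A D * (E * m D B) := by
      rw [key]
      refine le_trans (abs_add_le _ _) ?_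
      exact add_le_add (le_trans (abs_add_le _ _) (add_le_add b1 b2)) b3
    have hcollect : E * ((1 + E) * m A D) * ((1 + E) * m D B)
          + P * (E * m A D) * ((1 + E) * m D B)
          + P * m A D * (E * m D B)
        ≤ (1 + 2 * P) * E * (1 + E) ^ 2 * (m A D * m D B) := by
      have hK : E * (1 + E) ^ 2 + P * E * (1 + E) + P * E
          ≤ (1 + 2 * P) * E * (1 + E) ^ 2 := by
        nlinarith [mul_nonneg hP0 hE0, mul_nonneg (mul_nonneg hP0 hE0) hE0,
          mul_nonneg (mul_nonneg (mul_nonneg hP0 hE0) hE0) hE0]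
      have hs0 : 0 ≤ m A D * m D B := mul_nonneg hmAD hmDB
      calc E * ((1 + E) * m A D) * ((1 + E) * m D B)
            + P * (E * m A D) * ((1 + E) * m D B)
            + P * m A D * (E * m D B)
          = (E * (1 + E) ^ 2 + P * E * (1 + E) + P * E) * (m A D * m D B) := by
            ring
        _ ≤ (1 + 2 * P) * E * (1 + E) ^ 2 * (m A D * m D B) :=
            mul_le_mul_of_nonneg_right hK hs0
    have hfin : (1 + 2 * P) * E * (1 + E) ^ 2 * (m A D * m D B)
        ≤ (1 + 2 * P) * E * (1 + E) ^ 2 * m A B :=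
      mul_le_mul_of_nonneg_left (hmmul A D B)
        (mul_nonneg (mul_nonneg (by linarith : (0:ℝ) ≤ 1 + 2 * P) hE0)
          (sq_nonneg (1 + E)))
    exact le_trans habs (le_trans hcollect hfin)
  -- summing the delta part
  have hsum : (∑ D, p D * (if A = D then (1 : ℝ) else 0) * (if D = B then 1 else 0))
      = p B * (if A = B then 1 else 0) := by
    rw [Finset.sum_eq_single A]
    · by_cases h : A = B <;> simp [h]
    · intro b _ hb
      simp [Ne.symm hb]
    · intro h; exact absurd (Finset.mem_univ A) h
  -- comparing the asymptotic factors
  have hJ3 : jbr ρ ^ (3 * a) = J ^ 3 := by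
    rw [hJ, ← Real.rpow_natCast (jbr ρ ^ a) 3, ← Real.rpow_mul hj0]
    norm_num [mul_comm]
  have h1E : 1 + E ≤ (1 + C) * J := by
    have hCJ : 0 ≤ C * J := mul_nonneg hC (by linarith)
    have : C * J * e ≤ C * J := by nlinarith
    rw [hEdef] at *
    nlinarith
  have h2 : E * (1 + E) ^ 2 ≤ C * (1 + C) ^ 2 * (J ^ 3 * e) := by
    have hsq : (1 + E) ^ 2 ≤ ((1 + C) * J) ^ 2 :=
      pow_le_pow_left₀ (by linarith) h1E 2
    calc E * (1 + E) ^ 2 = (C * J * e) * (1 + E) ^ 2 := by rw [hEdef]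
      _ ≤ (C * J * e) * ((1 + C) * J) ^ 2 := by
          refine mul_le_mul_of_nonneg_left hsq ?_
          exact mul_nonneg (mul_nonneg hC (by linarith)) he0.le
      _ = C * (1 + C) ^ 2 * (J ^ 3 * e) := by ring
  have h3 : (1 + 2 * P) * E * (1 + E) ^ 2
      ≤ (1 + 2 * P) * (C * (1 + C) ^ 2 * (J ^ 3 * e)) := by
    calc (1 + 2 * P) * E * (1 + E) ^ 2 = (1 + 2 * P) * (E * (1 + E) ^ 2) := by ring
      _ ≤ _ := mul_le_mul_of_nonneg_left h2 (by linarith)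
  -- final assembly
  calc |(∑ D, ℓ D * X A D * Y D B) - p B * (if A = B then 1 else 0)|
      = |∑ D, (ℓ D * X A D * Y D B -
          p D * (if A = D then 1 else 0) * (if D = B then 1 else 0))| := by
        rw [Finset.sum_sub_distrib, hsum]
    _ ≤ ∑ D, |ℓ D * X A D * Y D B -
          p D * (if A = D then 1 else 0) * (if D = B then 1 else 0)| :=
        Finset.abs_sum_le_sum_abs _ _
    _ ≤ ∑ _D : Fin n, (1 + 2 * P) * E * (1 + E) ^ 2 * m A B :=
        Finset.sum_le_sum fun D _ => hterm D
    _ = n * ((1 + 2 * P) * E * (1 + E) ^ 2 * m A B) := by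
        rw [Finset.sum_const, Finset.card_univ, Fintype.card_fin, nsmul_eq_mul]
    _ ≤ n * ((1 + 2 * P) * C * (1 + C) ^ 2) * jbr ρ ^ (3 * a) * e * m A B := by
        rw [hJ3]
        calc (n : ℝ) * ((1 + 2 * P) * E * (1 + E) ^ 2 * m A B)
            ≤ (n : ℝ) * ((1 + 2 * P) * (C * (1 + C) ^ 2 * (J ^ 3 * e)) * m A B) := by
              refine mul_le_mul_of_nonneg_left ?_ (Nat.cast_nonneg n)
              exact mul_le_mul_of_nonneg_right h3 (hm0 A B).le
          _ = (n : ℝ) * ((1 + 2 * P) * C * (1 + C) ^ 2) * J ^ 3 * e * m A B := by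
              ring
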